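/- Fix x₀ > 0, t > 0, and α, β > 0, and let μ = (α/(α+β)) δ₀ + (β/(α+β)) δ_{x₀}. There exists z̄ ∈ ℝ with α e^{−z̄²/(2t)} = β e^{−(z̄−x₀)²/(2t)}, and at any such point, −(d²/dz²) log(μ*γ_t)(z̄) = (1/t)·(1 − x₀²/(4t)). In particular, if t < x₀²/4 then μ*γ_t is not log-concave. -/

import Mathlib

noncomputable section
open Real MeasureTheory

/-- Centered Gaussian density on `ℝ` with variance `t`. -/
def gaussDensity1 (t x : ℝ) : ℝ :=
  (2 * π * t) ^ (-(1 : ℝ) / 2) * Real.exp (-x ^ 2 / (2 * t))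

/-- The density of `μ * γ_t` for the two-point mixture
`μ = (α/(α+β)) δ₀ + (β/(α+β)) δ_{x₀}`. -/
def twoPointHeat (α β x₀ t z : ℝ) : ℝ :=
  α / (α + β) * gaussDensity1 t z + β / (α + β) * gaussDensity1 t (z - x₀)

namespace TwoPointAux

lemma hasDerivAt_E {t : ℝ} (ht : 0 < t) (x : ℝ) :
    HasDerivAt (fun x : ℝ => Real.exp (-x ^ 2 / (2 * t)))
      (Real.exp (-x ^ 2 / (2 * t)) * (-x / t)) x := by
  have h1 : HasDerivAt (fun x : ℝ => -x ^ 2 / (2 * t)) (-x / t) x := by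
    have := ((hasDerivAt_pow 2 x).neg).div_const (2 * t)
    refine this.congr_deriv ?_
    field_simp
    ring
  exact h1.exp

lemma algebra (t x₀ z k : ℝ) (ht : t ≠ 0) (hk : k ≠ 0) :
    -(((k * ((z ^ 2 + (z - x₀) ^ 2) / t ^ 2 - 2 / t)) * (2 * k)
        - (-(k * (2 * z - x₀) / t)) * (-(k * (2 * z - x₀) / t))) / (2 * k) ^ 2)
      = 1 / t * (1 - x₀ ^ 2 / (4 * t)) := by
  field_simp
  ring

lemma key (x₀ t α β : ℝ) (hx₀ : 0 < x₀) (ht : 0 < t) (hα : 0 < α) (hβ : 0 < β)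
    (z : ℝ) (hbal : α * Real.exp (-z ^ 2 / (2 * t)) = β * Real.exp (-(z - x₀) ^ 2 / (2 * t))) :
    -(deriv (deriv (fun y => Real.log (twoPointHeat α β x₀ t y))) z)
      = 1 / t * (1 - x₀ ^ 2 / (4 * t)) := by
  have hs : 0 < α + β := by linarith
  set c : ℝ := (2 * π * t) ^ (-(1 : ℝ) / 2) with hc
  have hcpos : 0 < c := Real.rpow_pos_of_pos (by positivity) _
  set E : ℝ → ℝ := fun x => Real.exp (-x ^ 2 / (2 * t)) with hEdef
  have hEpos : ∀ x, 0 < E x := fun x => Real.exp_pos _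
  set f : ℝ → ℝ := fun y => α / (α + β) * (c * E y) + β / (α + β) * (c * E (y - x₀)) with hf
  set f1 : ℝ → ℝ := fun y => α / (α + β) * (c * (E y * (-y / t)))
    + β / (α + β) * (c * (E (y - x₀) * (-(y - x₀) / t))) with hf1
  set f2 : ℝ → ℝ := fun y =>
      α / (α + β) * (c * (E y * (-y / t) * (-y / t) + E y * (-1 / t)))
    + β / (α + β) * (c * (E (y - x₀) * (-(y - x₀) / t) * (-(y - x₀) / t)
        + E (y - x₀) * (-1 / t))) with hf2
  have hfeq : twoPointHeat α β x₀ t = f := by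
    funext y
    simp only [twoPointHeat, gaussDensity1, hf, hc, hEdef]
  have hfpos : ∀ y, 0 < f y := fun y =>
    add_pos (mul_pos (div_pos hα hs) (mul_pos hcpos (hEpos y)))
      (mul_pos (div_pos hβ hs) (mul_pos hcpos (hEpos _)))
  have hdE : ∀ x, HasDerivAt E (E x * (-x / t)) x := hasDerivAt_E ht
  have hdEs : ∀ y, HasDerivAt (fun x => E (x - x₀)) (E (y - x₀) * (-(y - x₀) / t)) y := by
    intro y
    have := (hdE (y - x₀)).comp y ((hasDerivAt_id y).sub_const x₀)
    simpa [Function.comp_def] using this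
  have hdf : ∀ y, HasDerivAt f (f1 y) y := fun y =>
    (((hdE y).const_mul c).const_mul (α / (α + β))).add
      (((hdEs y).const_mul c).const_mul (β / (α + β)))
  have hdlog : ∀ y, HasDerivAt (fun x => Real.log (f x)) (f1 y / f y) y :=
    fun y => (hdf y).log (hfpos y).ne'
  have hderiv1 : deriv (fun x => Real.log (f x)) = fun y => f1 y / f y :=
    funext fun y => (hdlog y).deriv
  have hdf1 : ∀ y, HasDerivAt f1 (f2 y) y := by
    intro y
    have h1 : HasDerivAt (fun x => E x * (-x / t))
        (E y * (-y / t) * (-y / t) + E y * (-1 / t)) y := by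
      have hx : HasDerivAt (fun x : ℝ => -x / t) (-1 / t) y := by
        simpa using ((hasDerivAt_id y).neg.div_const t)
      exact (hdE y).mul hx
    have h2 : HasDerivAt (fun x => E (x - x₀) * (-(x - x₀) / t))
        (E (y - x₀) * (-(y - x₀) / t) * (-(y - x₀) / t) + E (y - x₀) * (-1 / t)) y := by
      have hx : HasDerivAt (fun x : ℝ => -(x - x₀) / t) (-1 / t) y := by
        simpa using (((hasDerivAt_id y).sub_const x₀).neg.div_const t)
      exact (hdEs y).mul hx
    exact ((h1.const_mul c).const_mul (α / (α + β))).add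
      ((h2.const_mul c).const_mul (β / (α + β)))
  have hdiv : HasDerivAt (fun y => f1 y / f y)
      ((f2 z * f z - f1 z * f1 z) / f z ^ 2) z :=
    (hdf1 z).div (hdf z) (hfpos z).ne'
  have hD2 : deriv (deriv (fun y => Real.log (twoPointHeat α β x₀ t y))) z
      = (f2 z * f z - f1 z * f1 z) / f z ^ 2 := by
    have : (fun y => Real.log (twoPointHeat α β x₀ t y)) = fun x => Real.log (f x) := by
      funext y; rw [hfeq]
    rw [this, hderiv1]
    exact hdiv.deriv
  rw [hD2]
  -- now evaluate at the balanced point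
  have hbal' : α * E z = β * E (z - x₀) := hbal
  set k : ℝ := α * c * E z / (α + β) with hk
  have hkpos : 0 < k := by
    apply div_pos _ hs
    exact mul_pos (mul_pos hα hcpos) (hEpos z)
  have hEv : E (z - x₀) = α * E z / β := by
    rw [eq_div_iff hβ.ne']
    linarith [hbal']
  have hfz : f z = 2 * k := by
    simp only [hf, hk, hEv]
    field_simp
    ring
  have hf1z : f1 z = -(k * (2 * z - x₀) / t) := by
    simp only [hf1, hk, hEv]
    field_simp
    ring
  have hf2z : f2 z = k * ((z ^ 2 + (z - x₀) ^ 2) / t ^ 2 - 2 / t) := by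
    simp only [hf2, hk, hEv]
    field_simp
    ring
  rw [hfz, hf1z, hf2z]
  exact algebra t x₀ z k ht.ne' hkpos.ne'

end TwoPointAux

/-- For the two-point mixture `μ = (α/(α+β)) δ₀ + (β/(α+β)) δ_{x₀}` with `x₀ > 0` there is
`z̄` with `α e^{-z̄²/(2t)} = β e^{-(z̄-x₀)²/(2t)}`, at any such `z̄` one has
`-(log(μ*γ_t))''(z̄) = (1/t)(1 - x₀²/(4t))`, and in particular `μ*γ_t` is not log-concave
when `t < x₀²/4`. -/
theorem two_point_mixture_balanced_point
    (x₀ : ℝ) (hx₀ : 0 < x₀) (t : ℝ) (ht : 0 < t) (α β : ℝ) (hα : 0 < α) (hβ : 0 < β) :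
    (∃ z : ℝ, α * Real.exp (-z ^ 2 / (2 * t)) = β * Real.exp (-(z - x₀) ^ 2 / (2 * t))) ∧
    (∀ z : ℝ, α * Real.exp (-z ^ 2 / (2 * t)) = β * Real.exp (-(z - x₀) ^ 2 / (2 * t)) →
      -(deriv (deriv (fun y => Real.log (twoPointHeat α β x₀ t y))) z)
        = 1 / t * (1 - x₀ ^ 2 / (4 * t))) ∧
    (t < x₀ ^ 2 / 4 →
      ¬ ∀ z : ℝ, 0 ≤ -(deriv (deriv (fun y => Real.log (twoPointHeat α β x₀ t y))) z)) := by
  have hexist : ∃ z : ℝ,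
      α * Real.exp (-z ^ 2 / (2 * t)) = β * Real.exp (-(z - x₀) ^ 2 / (2 * t)) := by
    refine ⟨x₀ / 2 + t / x₀ * Real.log (α / β), ?_⟩
    set z := x₀ / 2 + t / x₀ * Real.log (α / β) with hzdef
    have hL : α * Real.exp (-z ^ 2 / (2 * t)) = Real.exp (Real.log α + -z ^ 2 / (2 * t)) := by
      rw [Real.exp_add, Real.exp_log hα]
    have hR : β * Real.exp (-(z - x₀) ^ 2 / (2 * t))
        = Real.exp (Real.log β + -(z - x₀) ^ 2 / (2 * t)) := by
      rw [Real.exp_add, Real.exp_log hβ]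
    rw [hL, hR, Real.exp_eq_exp, hzdef, Real.log_div hα.ne' hβ.ne']
    field_simp
    ring
  refine ⟨hexist, fun z hz => TwoPointAux.key x₀ t α β hx₀ ht hα hβ z hz, ?_⟩
  intro ht' h
  obtain ⟨z, hz⟩ := hexist
  have h2 := TwoPointAux.key x₀ t α β hx₀ ht hα hβ z hz
  have h3 := h z
  rw [h2] at h3
  have h5 : 1 - x₀ ^ 2 / (4 * t) < 0 := by
    rw [sub_neg]
    rw [lt_div_iff₀ (by positivity : (0 : ℝ) < 4 * t)]
    linarith
  have h6 : 1 / t * (1 - x₀ ^ 2 / (4 * t)) < 0 :=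
    mul_neg_of_pos_of_neg (by positivity) h5
  linarith
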